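/- For any positive integers a, b ≥ 2, the Davenport constant of the group C_a × C_b equals (gcd(a,b) - 1) + (lcm(a,b) - 1) + 1, where C_n denotes the cyclic group of order n. -/

import Mathlib

open Finset AddMonoidAlgebra

section Nilp
variable {R : Type*} [CommRing R] {ι : Type*} [DecidableEq ι]

lemma nilp2 {p : ℕ} (hp : 0 < p) {u v : R} (hu : u ^ p = 0) (hv : v ^ p = 0)
    {F : ι → R} (hF : ∀ i, ∃ A B, F i = A * u + B * v)
    {s : Finset ι} (hcard : 2 * p - 1 ≤ s.card) : ∏ i ∈ s, F i = 0 := by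
  choose A B hAB using hF
  have : ∏ i ∈ s, F i = ∏ i ∈ s, (A i * u + B i * v) :=
    Finset.prod_congr rfl fun i _ => hAB i
  rw [this, Finset.prod_add]
  refine Finset.sum_eq_zero fun t ht => ?_
  rw [Finset.mem_powerset] at ht
  have hcards : t.card + (s \ t).card = s.card := by
    have := Finset.card_le_card ht; rw [Finset.card_sdiff_of_subset ht]; omega
  have h2 : p ≤ t.card ∨ p ≤ (s \ t).card := by
    have := Finset.card_le_card ht; omega
  rw [Finset.prod_mul_distrib, Finset.prod_mul_distrib,
    Finset.prod_const, Finset.prod_const]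
  rcases h2 with h | h
  · have : u ^ t.card = 0 := by
      rw [← Nat.sub_add_cancel h, pow_add, hu, mul_zero]
    rw [this]; ring
  · have : v ^ (s \ t).card = 0 := by
      rw [← Nat.sub_add_cancel h, pow_add, hv, mul_zero]
    rw [this]; ring

lemma nilp3 {p : ℕ} (hp : 0 < p) {u v w : R} (hu : u ^ p = 0) (hv : v ^ p = 0) (hw : w ^ p = 0)
    {F : ι → R} (hF : ∀ i, ∃ A B C, F i = A * u + B * v + C * w)
    {s : Finset ι} (hcard : 3 * p - 2 ≤ s.card) : ∏ i ∈ s, F i = 0 := by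
  choose A B C hABC using hF
  have : ∏ i ∈ s, F i = ∏ i ∈ s, ((A i * u + B i * v) + C i * w) :=
    Finset.prod_congr rfl fun i _ => hABC i
  rw [this, Finset.prod_add]
  refine Finset.sum_eq_zero fun t ht => ?_
  rw [Finset.mem_powerset] at ht
  have hcards : t.card + (s \ t).card = s.card := by
    have := Finset.card_le_card ht; rw [Finset.card_sdiff_of_subset ht]; omega
  have h2 : 2 * p - 1 ≤ t.card ∨ p ≤ (s \ t).card := by
    have := Finset.card_le_card ht; omega
  rcases h2 with h | h
  · rw [nilp2 hp hu hv (fun i => ⟨A i, B i, rfl⟩) h, zero_mul]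
  · have : w ^ (s \ t).card = 0 := by
      rw [← Nat.sub_add_cancel h, pow_add, hw, mul_zero]
    rw [Finset.prod_mul_distrib, Finset.prod_const, this]; ring

end Nilp

section Count
variable {ι : Type*} [DecidableEq ι] {p : ℕ} [Fact p.Prime]

lemma charP_ama {G : Type*} [AddMonoid G] : CharP (AddMonoidAlgebra (ZMod p) G) p := by
  have hinj : Function.Injective (AddMonoidAlgebra.singleZeroRingHom (R := ZMod p) (M := G)) := by
    intro x y hxy
    have h' : AddMonoidAlgebra.single (0:G) x = AddMonoidAlgebra.single 0 y := hxy
    simpa using congrArg (fun f : AddMonoidAlgebra (ZMod p) G => f.coeff 0) h'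
  exact charP_of_injective_ringHom hinj p

lemma usq_zero {G : Type*} [AddCommMonoid G] (e : G) (he : p • e = 0) :
    (1 - AddMonoidAlgebra.single e (1 : ZMod p)) ^ p = 0 := by
  haveI : CharP (AddMonoidAlgebra (ZMod p) G) p := charP_ama
  rw [sub_pow_char, one_pow, AddMonoidAlgebra.single_pow, he, one_pow,
    ← AddMonoidAlgebra.one_def, sub_self]

lemma geom_dec {R : Type*} [CommRing R] (t : R) (n : ℕ) :
    ∃ A, 1 - t ^ n = A * (1 - t) := by
  refine ⟨∑ i ∈ range n, t ^ i, ?_⟩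
  have h := geom_sum_mul t n
  linear_combination h

lemma one_sub_single_smul {G : Type*} [AddCommMonoid G] (e : G) (n : ℕ) :
    ∃ A, 1 - AddMonoidAlgebra.single (n • e) (1 : ZMod p)
      = A * (1 - AddMonoidAlgebra.single e 1) := by
  have h : (AddMonoidAlgebra.single e (1:ZMod p)) ^ n
      = AddMonoidAlgebra.single (n • e) 1 := by
    rw [AddMonoidAlgebra.single_pow, one_pow]
  obtain ⟨A, hA⟩ := geom_dec (AddMonoidAlgebra.single e (1:ZMod p)) n
  exact ⟨A, by rw [← h]; exact hA⟩

lemma one_sub_single_add {G : Type*} [AddCommMonoid G] (g h : G) :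
    1 - AddMonoidAlgebra.single (g + h) (1:ZMod p)
      = (1 - AddMonoidAlgebra.single g 1)
        + AddMonoidAlgebra.single g 1 * (1 - AddMonoidAlgebra.single h 1) := by
  have : AddMonoidAlgebra.single g (1:ZMod p) * AddMonoidAlgebra.single h 1
      = AddMonoidAlgebra.single (g + h) 1 := by
    rw [AddMonoidAlgebra.single_mul_single, one_mul]
  rw [← this]; ring

lemma expand_prod {G : Type*} [AddCommMonoid G] (c : ι → G) (s : Finset ι) :
    ∏ i ∈ s, (1 - AddMonoidAlgebra.single (c i) (1:ZMod p)) =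
    ∑ T ∈ s.powerset, AddMonoidAlgebra.single (∑ i ∈ T, c i) ((-1)^T.card : ZMod p) := by
  have h1 : ∀ i ∈ s, (1 : AddMonoidAlgebra (ZMod p) G) - AddMonoidAlgebra.single (c i) 1
      = AddMonoidAlgebra.single (c i) (-1) + 1 := by
    intro i _
    have h0 : AddMonoidAlgebra.single (c i) (-1 : ZMod p)
        = - AddMonoidAlgebra.single (c i) 1 := by
      refine eq_neg_of_add_eq_zero_left ?_
      rw [← AddMonoidAlgebra.single_add, neg_add_cancel, AddMonoidAlgebra.single_zero]
    rw [h0]; ring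
  rw [Finset.prod_congr rfl h1, Finset.prod_add]
  refine Finset.sum_congr rfl fun T hT => ?_
  rw [Finset.prod_const_one, mul_one, AddMonoidAlgebra.prod_single, Finset.prod_const]

lemma count_general {G : Type*} [AddCommMonoid G] [DecidableEq G] (c : ι → G) (s : Finset ι)
    (hprod : ∏ i ∈ s, (1 - AddMonoidAlgebra.single (c i) (1:ZMod p)) = 0) :
    ∑ T ∈ s.powerset, (if (∑ i ∈ T, c i) = 0 then ((-1)^T.card : ZMod p) else 0) = 0 := by
  have h := expand_prod (p := p) c s
  rw [hprod] at h
  have hsum : ((∑ T ∈ s.powerset, AddMonoidAlgebra.single (∑ i ∈ T, c i)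
        ((-1)^T.card : ZMod p)) : AddMonoidAlgebra (ZMod p) G).coeff 0
      = ∑ T ∈ s.powerset, (AddMonoidAlgebra.single (∑ i ∈ T, c i)
        ((-1)^T.card : ZMod p) : AddMonoidAlgebra (ZMod p) G).coeff 0 := by
    rw [AddMonoidAlgebra.coeff_sum, Finsupp.finset_sum_apply]
  have h2 : (0:ZMod p) = ∑ T ∈ s.powerset, (AddMonoidAlgebra.single (∑ i ∈ T, c i)
      ((-1)^T.card : ZMod p) : AddMonoidAlgebra (ZMod p) G).coeff 0 := by
    rw [← hsum, ← h]; rfl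
  refine Eq.trans (Finset.sum_congr rfl fun T _ => ?_) h2.symm
  simp [Finsupp.single_apply]

-- decomposition for rank 2
lemma dec2 (g : ZMod p × ZMod p) :
    ∃ A B : AddMonoidAlgebra (ZMod p) (ZMod p × ZMod p),
      1 - AddMonoidAlgebra.single g 1 =
        A * (1 - AddMonoidAlgebra.single ((1:ZMod p), (0:ZMod p)) 1)
      + B * (1 - AddMonoidAlgebra.single ((0:ZMod p), (1:ZMod p)) 1) := by
  haveI : NeZero p := ⟨(Fact.out : p.Prime).ne_zero⟩
  obtain ⟨x, y⟩ := g
  have hg : (x, y) = x.val • ((1:ZMod p), (0:ZMod p)) + y.val • ((0:ZMod p), (1:ZMod p)) := by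
    ext <;> simp [ZMod.natCast_val, ZMod.cast_id]
  obtain ⟨A, hA⟩ := one_sub_single_smul (p := p) ((1:ZMod p), (0:ZMod p)) x.val
  obtain ⟨B, hB⟩ := one_sub_single_smul (p := p) ((0:ZMod p), (1:ZMod p)) y.val
  refine ⟨A, AddMonoidAlgebra.single (x.val • ((1:ZMod p), (0:ZMod p))) 1 * B, ?_⟩
  rw [hg, one_sub_single_add, hA, hB]
  ring

lemma dec3 (g : (ZMod p × ZMod p) × ZMod p) :
    ∃ A B C : AddMonoidAlgebra (ZMod p) ((ZMod p × ZMod p) × ZMod p),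
      1 - AddMonoidAlgebra.single g 1 =
        A * (1 - AddMonoidAlgebra.single (((1:ZMod p), (0:ZMod p)), (0:ZMod p)) 1)
      + B * (1 - AddMonoidAlgebra.single (((0:ZMod p), (1:ZMod p)), (0:ZMod p)) 1)
      + C * (1 - AddMonoidAlgebra.single (((0:ZMod p), (0:ZMod p)), (1:ZMod p)) 1) := by
  haveI : NeZero p := ⟨(Fact.out : p.Prime).ne_zero⟩
  obtain ⟨⟨x, y⟩, z⟩ := g
  set e1 : (ZMod p × ZMod p) × ZMod p := (((1:ZMod p), (0:ZMod p)), (0:ZMod p))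
  set e2 : (ZMod p × ZMod p) × ZMod p := (((0:ZMod p), (1:ZMod p)), (0:ZMod p))
  set e3 : (ZMod p × ZMod p) × ZMod p := (((0:ZMod p), (0:ZMod p)), (1:ZMod p))
  have hg : ((x, y), z) = (x.val • e1 + y.val • e2) + z.val • e3 := by
    simp only [e1, e2, e3, Prod.smul_mk, Prod.mk_add_mk]
    ext <;> simp [ZMod.natCast_val, ZMod.cast_id]
  obtain ⟨A, hA⟩ := one_sub_single_smul (p := p) e1 x.val
  obtain ⟨B, hB⟩ := one_sub_single_smul (p := p) e2 y.val
  obtain ⟨C, hC⟩ := one_sub_single_smul (p := p) e3 z.val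
  refine ⟨A, AddMonoidAlgebra.single (x.val • e1) 1 * B,
    AddMonoidAlgebra.single (x.val • e1 + y.val • e2) 1 * C, ?_⟩
  rw [hg, one_sub_single_add, one_sub_single_add (g := x.val • e1), hA, hB, hC]
  ring

lemma psmul_zmod (x : ZMod p) : p • x = 0 := by
  simp [nsmul_eq_mul, ZMod.natCast_self]

lemma count2 (c : ι → ZMod p × ZMod p) {s : Finset ι} (hs : 2 * p - 1 ≤ s.card) :
    ∑ T ∈ s.powerset, (if (∑ i ∈ T, c i) = 0 then ((-1)^T.card : ZMod p) else 0) = 0 := by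
  refine count_general c s ?_
  refine nilp2 (Fact.out : p.Prime).pos
    (usq_zero ((1:ZMod p), (0:ZMod p)) ?_) (usq_zero ((0:ZMod p), (1:ZMod p)) ?_)
    (fun i => dec2 (c i)) hs <;>
  · ext <;> simp [psmul_zmod]

lemma count3 (c : ι → (ZMod p × ZMod p) × ZMod p) {s : Finset ι} (hs : 3 * p - 2 ≤ s.card) :
    ∑ T ∈ s.powerset, (if (∑ i ∈ T, c i) = 0 then ((-1)^T.card : ZMod p) else 0) = 0 := by
  refine count_general c s ?_
  refine nilp3 (Fact.out : p.Prime).pos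
    (usq_zero (((1:ZMod p), (0:ZMod p)), (0:ZMod p)) ?_)
    (usq_zero (((0:ZMod p), (1:ZMod p)), (0:ZMod p)) ?_)
    (usq_zero (((0:ZMod p), (0:ZMod p)), (1:ZMod p)) ?_)
    (fun i => dec3 (c i)) hs <;>
  · ext <;> simp [psmul_zmod]

lemma one_ne_zero_zmod : (1 : ZMod p) ≠ 0 := by
  haveI : Fact (1 < p) := ⟨(Fact.out : p.Prime).one_lt⟩
  exact one_ne_zero

lemma exists_zs2 (c : ι → ZMod p × ZMod p) {s : Finset ι} (hs : 2 * p - 1 ≤ s.card) :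
    ∃ T ⊆ s, T.Nonempty ∧ ∑ i ∈ T, c i = 0 := by
  by_contra hcon
  push_neg at hcon
  have h := count2 c hs
  rw [Finset.sum_eq_single ∅ ?_ ?_] at h
  · simp only [Finset.sum_empty, Finset.card_empty, pow_zero, if_pos rfl] at h
    exact one_ne_zero_zmod h
  · intro T hT hne
    exact if_neg (hcon T (Finset.mem_powerset.mp hT) (Finset.nonempty_iff_ne_empty.mpr hne))
  · intro hmem
    exact absurd (Finset.empty_mem_powerset s) hmem

lemma exists_zs3 (c : ι → ZMod p × ZMod p) {s : Finset ι} (hs : 3 * p - 2 ≤ s.card) :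
    ∃ T ⊆ s, T.Nonempty ∧ (∑ i ∈ T, c i = 0) ∧ p ∣ T.card := by
  by_contra hcon
  push_neg at hcon
  have h := count3 (fun i => ((c i), (1 : ZMod p))) hs
  rw [Finset.sum_eq_single ∅ ?_ ?_] at h
  · simp only [Finset.sum_empty, Finset.card_empty, pow_zero, if_pos rfl] at h
    exact one_ne_zero_zmod h
  · intro T hT hne
    refine if_neg fun h0 => ?_
    have h1 : (∑ i ∈ T, ((c i), (1:ZMod p))).1 = ∑ i ∈ T, c i := by
      rw [Prod.fst_sum]
    have h2 : (∑ i ∈ T, ((c i), (1:ZMod p))).2 = (T.card : ZMod p) := by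
      rw [Prod.snd_sum]
      simp [Finset.sum_const, nsmul_eq_mul]
    have hc1 : ∑ i ∈ T, c i = 0 := by rw [← h1, h0]; rfl
    have hc2 : p ∣ T.card := by
      rw [← ZMod.natCast_eq_zero_iff, ← h2, h0]; rfl
    exact hcon T (Finset.mem_powerset.mp hT) (Finset.nonempty_iff_ne_empty.mpr hne) hc1 hc2
  · intro hmem
    exact absurd (Finset.empty_mem_powerset s) hmem


end Count

section Comb
variable {ι : Type*} [DecidableEq ι]

lemma eta_zmod {p : ℕ} (hp : p.Prime) (c : ι → ZMod p × ZMod p) {s : Finset ι}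
    (hs : 3 * p - 2 ≤ s.card) :
    ∃ T ⊆ s, T.Nonempty ∧ T.card ≤ p ∧ ∑ i ∈ T, c i = 0 := by
  haveI : Fact p.Prime := ⟨hp⟩
  by_cases hp2 : p = 2
  · subst hp2
    by_cases hz : ∃ i ∈ s, c i = 0
    · obtain ⟨i, hi, h0⟩ := hz
      exact ⟨{i}, Finset.singleton_subset_iff.mpr hi, Finset.singleton_nonempty i,
        by simp, by simp [h0]⟩
    · push_neg at hz
      have hmap : ∀ i ∈ s, c i ∈ (Finset.univ.erase (0 : ZMod 2 × ZMod 2)) := by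
        intro i hi
        exact Finset.mem_erase.mpr ⟨hz i hi, Finset.mem_univ _⟩
      have hcard : (Finset.univ.erase (0 : ZMod 2 × ZMod 2)).card < s.card := by
        rw [Finset.card_erase_of_mem (Finset.mem_univ _)]
        have : Fintype.card (ZMod 2 × ZMod 2) = 4 := by decide
        simp only [Finset.card_univ, this]
        omega
      obtain ⟨i, hi, j, hj, hij, hcij⟩ :=
        Finset.exists_ne_map_eq_of_card_lt_of_maps_to hcard hmap
      refine ⟨{i, j}, ?_, ⟨i, by simp⟩, ?_, ?_⟩
      · intro x hx
        rcases Finset.mem_insert.mp hx with h | h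
        · exact h ▸ hi
        · exact (Finset.mem_singleton.mp h) ▸ hj
      · rw [Finset.card_insert_of_notMem (by simp [hij]), Finset.card_singleton]
      · rw [Finset.sum_pair hij, hcij]
        have hre : (c j + c j) = ((c j).1 + (c j).1, (c j).2 + (c j).2) := rfl
        rw [hre, CharTwo.add_self_eq_zero, CharTwo.add_self_eq_zero]
        rfl
  · by_contra hcon
    push_neg at hcon
    obtain ⟨s₀, hs₀sub, hs₀card⟩ := Finset.exists_subset_card_eq hs
    obtain ⟨U, hUsub, hUne, hUsum, hUdvd⟩ := exists_zs3 c (s := s₀) (le_of_eq hs₀card.symm)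
    have hUs : U ⊆ s := hUsub.trans hs₀sub
    have hUcard : U.card = 2 * p := by
      obtain ⟨k, hk⟩ := hUdvd
      have h1 : 1 ≤ U.card := Finset.card_pos.mpr hUne
      have h2 : U.card ≤ 3 * p - 2 := hs₀card ▸ Finset.card_le_card hUsub
      have hUp : U.card ≠ p := by
        intro he
        exact hcon U hUs hUne (le_of_eq he) hUsum
      have hp2' : 2 ≤ p := hp.two_le
      have hk0 : k ≠ 0 := by rintro rfl; rw [mul_zero] at hk; omega
      have hk1 : k ≠ 1 := by rintro rfl; rw [mul_one] at hk; exact hUp hk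
      have hk3 : k < 3 := by
        by_contra h'
        push_neg at h'
        have h3 := Nat.mul_le_mul_left p h'
        omega
      have hk2 : k = 2 := by omega
      subst hk2
      omega
    have h := count2 c (s := U) (by omega)
    rw [← Finset.add_sum_erase _ _ (Finset.empty_mem_powerset U)] at h
    have hUmem : U ∈ (U.powerset.erase ∅) := by
      refine Finset.mem_erase.mpr ⟨?_, Finset.mem_powerset_self U⟩
      exact Finset.nonempty_iff_ne_empty.mp hUne
    rw [← Finset.add_sum_erase _ _ hUmem] at h
    have hrest : ∑ V ∈ (U.powerset.erase ∅).erase U,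
        (if (∑ i ∈ V, c i) = 0 then ((-1)^V.card : ZMod p) else 0) = 0 := by
      refine Finset.sum_eq_zero fun V hV => ?_
      have hVU : V ≠ U := (Finset.mem_erase.mp hV).1
      have hVne : V ≠ ∅ := (Finset.mem_erase.mp (Finset.mem_erase.mp hV).2).1
      have hVsub : V ⊆ U :=
        Finset.mem_powerset.mp (Finset.mem_erase.mp (Finset.mem_erase.mp hV).2).2
      refine if_neg fun h0 => ?_
      rcases le_or_gt V.card p with hle | hgt
      · exact hcon V (hVsub.trans hUs) (Finset.nonempty_iff_ne_empty.mpr hVne) hle h0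
      · have hWsum : ∑ i ∈ U \ V, c i = 0 := by
          rw [Finset.sum_sdiff_eq_sub hVsub, h0, hUsum, sub_zero]
        have hVlt : V.card < U.card := Finset.card_lt_card (ssubset_of_ne_of_subset hVU hVsub)
        have hWcard : (U \ V).card = U.card - V.card := Finset.card_sdiff_of_subset hVsub
        refine hcon (U \ V) ((Finset.sdiff_subset).trans hUs) ?_ (by omega) hWsum
        rw [← Finset.card_pos]
        omega
    rw [hrest, add_zero] at h
    have hempty : (if (∑ i ∈ (∅:Finset ι), c i) = 0 then ((-1)^(∅:Finset ι).card : ZMod p) else 0)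
        = 1 := by simp
    have hUterm : (if (∑ i ∈ U, c i) = 0 then ((-1)^U.card : ZMod p) else 0) = 1 := by
      rw [if_pos hUsum, hUcard, pow_mul, neg_one_sq, one_pow]
    rw [hempty, hUterm] at h
    have h2 : ((2 : ℕ) : ZMod p) = 0 := by push_cast; linear_combination h
    rw [ZMod.natCast_eq_zero_iff] at h2
    exact hp2 ((Nat.prime_dvd_prime_iff_eq hp Nat.prime_two).mp h2)

lemma eta_int {p : ℕ} (hp : p.Prime) (f : ι → ℤ × ℤ) {s : Finset ι}
    (hs : 3 * p - 2 ≤ s.card) :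
    ∃ T ⊆ s, T.Nonempty ∧ T.card ≤ p ∧
      (p:ℤ) ∣ (∑ i ∈ T, f i).1 ∧ (p:ℤ) ∣ (∑ i ∈ T, f i).2 := by
  obtain ⟨T, hTs, hTne, hTcard, hTsum⟩ :=
    eta_zmod hp (fun i => (((f i).1 : ZMod p), ((f i).2 : ZMod p))) hs
  refine ⟨T, hTs, hTne, hTcard, ?_, ?_⟩
  · rw [← ZMod.intCast_zmod_eq_zero_iff_dvd]
    have h1 := congrArg Prod.fst hTsum
    rw [Prod.fst_sum] at h1
    rw [Prod.fst_sum, Int.cast_sum]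
    exact h1
  · rw [← ZMod.intCast_zmod_eq_zero_iff_dvd]
    have h1 := congrArg Prod.snd hTsum
    rw [Prod.snd_sum] at h1
    rw [Prod.snd_sum, Int.cast_sum]
    exact h1

lemma dpp_int {p : ℕ} (hp : p.Prime) (f : ι → ℤ × ℤ) {s : Finset ι}
    (hs : 2 * p - 1 ≤ s.card) :
    ∃ T ⊆ s, T.Nonempty ∧
      (p:ℤ) ∣ (∑ i ∈ T, f i).1 ∧ (p:ℤ) ∣ (∑ i ∈ T, f i).2 := by
  haveI : Fact p.Prime := ⟨hp⟩
  obtain ⟨T, hTs, hTne, hTsum⟩ :=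
    exists_zs2 (fun i => (((f i).1 : ZMod p), ((f i).2 : ZMod p))) hs
  refine ⟨T, hTs, hTne, ?_, ?_⟩
  · rw [← ZMod.intCast_zmod_eq_zero_iff_dvd]
    have h1 := congrArg Prod.fst hTsum
    rw [Prod.fst_sum] at h1
    rw [Prod.fst_sum, Int.cast_sum]
    exact h1
  · rw [← ZMod.intCast_zmod_eq_zero_iff_dvd]
    have h1 := congrArg Prod.snd hTsum
    rw [Prod.snd_sum] at h1
    rw [Prod.snd_sum, Int.cast_sum]
    exact h1

lemma prefix_int (a b : ℕ) (ha : 0 < a) (hb : 0 < b) (f : ι → ℤ × ℤ) {s : Finset ι}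
    (hs : a * b ≤ s.card) :
    ∃ T ⊆ s, T.Nonempty ∧ (a:ℤ) ∣ (∑ i ∈ T, f i).1 ∧ (b:ℤ) ∣ (∑ i ∈ T, f i).2 := by
  haveI : NeZero a := ⟨ha.ne'⟩
  haveI : NeZero b := ⟨hb.ne'⟩
  set g : ι → ZMod a × ZMod b := fun i => (((f i).1 : ZMod a), ((f i).2 : ZMod b)) with hg
  set l := s.toList with hl
  have hnodup : l.Nodup := Finset.nodup_toList s
  set t : ℕ → Finset ι := fun j => (l.take j).toFinset with ht
  have hsub : ∀ j, t j ⊆ s := by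
    intro j x hx
    rw [ht, List.mem_toFinset] at hx
    exact (Finset.mem_toList).mp (List.mem_of_mem_take hx)
  have hmono : ∀ {j1 j2 : ℕ}, j1 ≤ j2 → t j1 ⊆ t j2 := by
    intro j1 j2 hle x hx
    rw [ht, List.mem_toFinset] at hx ⊢
    have : l.take j1 = (l.take j2).take j1 := by
      rw [List.take_take, Nat.min_eq_left hle]
    rw [this] at hx
    exact List.mem_of_mem_take hx
  have hcard : ∀ j ≤ a * b, (t j).card = j := by
    intro j hj
    rw [ht, List.toFinset_card_of_nodup (hnodup.sublist (List.take_sublist _ _)),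
      List.length_take, hl, Finset.length_toList]
    omega
  have hpigeon : ∃ j1 ∈ Finset.range (a*b+1), ∃ j2 ∈ Finset.range (a*b+1),
      j1 ≠ j2 ∧ ∑ i ∈ t j1, g i = ∑ i ∈ t j2, g i := by
    refine Finset.exists_ne_map_eq_of_card_lt_of_maps_to ?_ (fun j _ => Finset.mem_univ _)
    rw [Finset.card_range, Finset.card_univ, Fintype.card_prod, ZMod.card, ZMod.card]
    omega
  have key : ∀ j1 j2, j1 ∈ Finset.range (a*b+1) → j2 ∈ Finset.range (a*b+1) → j1 < j2 →
      ∑ i ∈ t j1, g i = ∑ i ∈ t j2, g i →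
      ∃ T ⊆ s, T.Nonempty ∧ (a:ℤ) ∣ (∑ i ∈ T, f i).1 ∧ (b:ℤ) ∣ (∑ i ∈ T, f i).2 := by
    intro j1 j2 hj1 hj2 hlt heq
    rw [Finset.mem_range] at hj1 hj2
    refine ⟨t j2 \ t j1, (Finset.sdiff_subset).trans (hsub j2), ?_, ?_, ?_⟩
    · rw [← Finset.card_pos, Finset.card_sdiff_of_subset (hmono hlt.le),
        hcard j1 (by omega), hcard j2 (by omega)]
      omega
    · rw [← ZMod.intCast_zmod_eq_zero_iff_dvd, Prod.fst_sum, Int.cast_sum]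
      have h0 : ∑ i ∈ t j2 \ t j1, g i = 0 := by
        rw [Finset.sum_sdiff_eq_sub (hmono hlt.le), heq, sub_self]
      have h1 := congrArg Prod.fst h0
      rw [Prod.fst_sum] at h1
      exact h1
    · rw [← ZMod.intCast_zmod_eq_zero_iff_dvd, Prod.snd_sum, Int.cast_sum]
      have h0 : ∑ i ∈ t j2 \ t j1, g i = 0 := by
        rw [Finset.sum_sdiff_eq_sub (hmono hlt.le), heq, sub_self]
      have h1 := congrArg Prod.snd h0
      rw [Prod.snd_sum] at h1
      exact h1
  obtain ⟨j1, hj1, j2, hj2, hne, heq⟩ := hpigeon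
  rcases hne.lt_or_gt with hlt | hlt
  · exact key j1 j2 hj1 hj2 hlt heq
  · exact key j2 j1 hj2 hj1 hlt heq.symm

end Comb


lemma split_aux : ∀ n a b : ℕ, a * b = n → 0 < a → 0 < b →
    ∃ q r c d, a = q * r * c ∧ b = q * r * d ∧ Nat.Coprime q r ∧ Nat.Coprime q c ∧
      Nat.Coprime r d ∧ Nat.Coprime c d := by
  intro n
  induction n using Nat.strong_induction_on with
  | _ n ih =>
    intro a b hab ha hb
    by_cases hn : n = 1
    · subst hn
      have h1 : a = 1 := Nat.eq_one_of_mul_eq_one_right hab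
      have h2 : b = 1 := Nat.eq_one_of_mul_eq_one_left hab
      exact ⟨1, 1, 1, 1, by simp [h1], by simp [h2], Nat.coprime_one_left 1,
        Nat.coprime_one_left 1, Nat.coprime_one_left 1, Nat.coprime_one_left 1⟩
    · obtain ⟨p, hp, hpd⟩ := Nat.exists_prime_and_dvd hn
      rw [← hab] at hpd
      set α := a.factorization p with hα
      set β := b.factorization p with hβ
      set a' := ordCompl[p] a with ha'
      set b' := ordCompl[p] b with hb'
      have hpa : p ^ α * a' = a := Nat.ordProj_mul_ordCompl_eq_self a p
      have hpb : p ^ β * b' = b := Nat.ordProj_mul_ordCompl_eq_self b p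
      have hnda : ¬ p ∣ a' := Nat.not_dvd_ordCompl hp ha.ne'
      have hndb : ¬ p ∣ b' := Nat.not_dvd_ordCompl hp hb.ne'
      have ha'pos : 0 < a' := Nat.ordCompl_pos p ha.ne'
      have hb'pos : 0 < b' := Nat.ordCompl_pos p hb.ne'
      have hexp : 0 < α + β := by
        rcases (Nat.Prime.dvd_mul hp).mp hpd with h | h
        · have := (Nat.Prime.factorization_pos_of_dvd hp ha.ne' h)
          omega
        · have := (Nat.Prime.factorization_pos_of_dvd hp hb.ne' h)
          omega
      have hlt : a' * b' < n := by
        have h2 : 2 ≤ p ^ (α + β) := le_trans hp.two_le (Nat.le_self_pow (by omega) p)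
        have : a * b = p ^ (α + β) * (a' * b') := by
          rw [← hpa, ← hpb, pow_add]; ring
        rw [hab] at this
        nlinarith [ha'pos, hb'pos]
      obtain ⟨q, r, c, d, hqa, hqb, hqr, hqc, hrd, hcd⟩ :=
        ih (a' * b') hlt a' b' rfl ha'pos hb'pos
      have hq : q ∣ a' := ⟨r * c, by rw [hqa]; ring⟩
      have hr : r ∣ a' := ⟨q * c, by rw [hqa]; ring⟩
      have hc : c ∣ a' := ⟨q * r, by rw [hqa]; ring⟩
      have hd : d ∣ b' := ⟨q * r, by rw [hqb]; ring⟩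
      have hpq : Nat.Coprime p q := (Nat.Prime.coprime_iff_not_dvd hp).mpr
        (fun h => hnda (h.trans hq))
      have hpr : Nat.Coprime p r := (Nat.Prime.coprime_iff_not_dvd hp).mpr
        (fun h => hnda (h.trans hr))
      have hpc : Nat.Coprime p c := (Nat.Prime.coprime_iff_not_dvd hp).mpr
        (fun h => hnda (h.trans hc))
      have hpdd : Nat.Coprime p d := (Nat.Prime.coprime_iff_not_dvd hp).mpr
        (fun h => hndb (h.trans hd))
      rcases le_or_gt β α with hba | hba
      · refine ⟨q, p ^ β * r, p ^ (α - β) * c, d, ?_, ?_, ?_, ?_, ?_, ?_⟩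
        · have hsp : p ^ α = p ^ β * p ^ (α - β) := by
            rw [← pow_add]; congr 1; omega
          rw [← hpa, hqa, hsp]; ring
        · rw [← hpb, hqb]; ring
        · exact Nat.Coprime.mul_right (hpq.symm.pow_right β) hqr
        · exact Nat.Coprime.mul_right (hpq.symm.pow_right (α - β)) hqc
        · exact Nat.Coprime.mul (hpdd.pow_left β) hrd
        · exact Nat.Coprime.mul (hpdd.pow_left (α - β)) hcd
      · refine ⟨p ^ α * q, r, c, p ^ (β - α) * d, ?_, ?_, ?_, ?_, ?_, ?_⟩
        · rw [← hpa, hqa]; ring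
        · have hsp : p ^ β = p ^ α * p ^ (β - α) := by
            rw [← pow_add]; congr 1; omega
          rw [← hpb, hqb, hsp]; ring
        · exact Nat.Coprime.mul (hpr.pow_left α) hqr
        · exact Nat.Coprime.mul (hpc.pow_left α) hqc
        · exact Nat.Coprime.mul_right (hpr.symm.pow_right (β - α)) hrd
        · exact Nat.Coprime.mul_right (hpc.symm.pow_right (β - α)) hcd

section MainPart

lemma extract_pieces {ι : Type} [DecidableEq ι] {p : ℕ} (hp : p.Prime) (f : ι → ℤ × ℤ) :
    ∀ (j : ℕ) (r : Finset ι), j * p + p - 1 ≤ r.card →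
      ∃ L : List (Finset ι), L.length = j ∧ L.Pairwise Disjoint ∧
        ∀ P ∈ L, P ⊆ r ∧ P.Nonempty ∧ (p:ℤ) ∣ (∑ i ∈ P, f i).1 ∧ (p:ℤ) ∣ (∑ i ∈ P, f i).2 := by
  intro j
  induction j with
  | zero => exact fun r _ => ⟨[], rfl, List.Pairwise.nil, fun P hP => absurd hP List.not_mem_nil⟩
  | succ j ihj =>
    intro r hr
    have hppos : 0 < p := hp.pos
    have hsucc : (j + 1) * p = j * p + p := Nat.succ_mul j p
    by_cases hj0 : j = 0
    · subst hj0
      obtain ⟨T, hTsub, hTne, hd1, hd2⟩ := dpp_int hp f (s := r) (by omega)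
      refine ⟨[T], rfl, List.pairwise_singleton _ _, fun P hP => ?_⟩
      rw [List.mem_singleton] at hP
      subst hP
      exact ⟨hTsub, hTne, hd1, hd2⟩
    · have hj1 : 1 ≤ j := by omega
      have hjp : p ≤ j * p := le_trans (by omega) (Nat.mul_le_mul_right p hj1)
      obtain ⟨T, hTsub, hTne, hTp, hd1, hd2⟩ := eta_int hp f (s := r) (by omega)
      have hcd : j * p + p - 1 ≤ (r \ T).card := by
        rw [Finset.card_sdiff_of_subset hTsub]
        have := Finset.card_le_card hTsub
        omega
      obtain ⟨L, hlen, hpw, hmem⟩ := ihj (r \ T) hcd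
      refine ⟨T :: L, by simp [hlen], ?_, ?_⟩
      · refine List.Pairwise.cons (fun P hP => ?_) hpw
        have hPsub := (hmem P hP).1
        exact Finset.disjoint_left.mpr fun x hxT hxP =>
          (Finset.mem_sdiff.mp (hPsub hxP)).2 hxT
      · intro P hP
        rcases List.mem_cons.mp hP with h | h
        · subst h; exact ⟨hTsub, hTne, hd1, hd2⟩
        · obtain ⟨h1, h2, h3, h4⟩ := hmem P h
          exact ⟨h1.trans Finset.sdiff_subset, h2, h3, h4⟩

lemma main_int : ∀ (g : ℕ), ∀ {ι : Type} [DecidableEq ι], ∀ (a b : ℕ), 0 < a → 0 < b →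
    Nat.gcd a b = g → ∀ (f : ι → ℤ × ℤ) (s : Finset ι),
    Nat.gcd a b + Nat.lcm a b - 1 ≤ s.card →
    ∃ T ⊆ s, T.Nonempty ∧ (a:ℤ) ∣ (∑ i ∈ T, f i).1 ∧ (b:ℤ) ∣ (∑ i ∈ T, f i).2 := by
  intro g
  induction g using Nat.strong_induction_on with
  | _ g ih =>
    intro ι _inst a b ha hb hg f s hs
    by_cases hg1 : Nat.gcd a b = 1
    · have hlcm : Nat.lcm a b = a * b := Nat.Coprime.lcm_eq_mul hg1
      refine prefix_int a b ha hb f ?_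
      rw [hlcm, hg1] at hs
      have hab : 0 < a * b := Nat.mul_pos ha hb
      omega
    · obtain ⟨p, hp, hpd⟩ := Nat.exists_prime_and_dvd hg1
      have hppos : 0 < p := hp.pos
      have hpa : p ∣ a := hpd.trans (Nat.gcd_dvd_left a b)
      have hpb : p ∣ b := hpd.trans (Nat.gcd_dvd_right a b)
      obtain ⟨a', ha'⟩ := hpa
      obtain ⟨b', hb'⟩ := hpb
      have ha'pos : 0 < a' := by
        rcases Nat.eq_zero_or_pos a' with h | h
        · subst h; rw [Nat.mul_zero] at ha'; omega
        · exact h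
      have hb'pos : 0 < b' := by
        rcases Nat.eq_zero_or_pos b' with h | h
        · subst h; rw [Nat.mul_zero] at hb'; omega
        · exact h
      have hgcdeq : Nat.gcd a b = p * Nat.gcd a' b' := by rw [ha', hb', Nat.gcd_mul_left]
      have hlcmeq : Nat.lcm a b = p * Nat.lcm a' b' := by rw [ha', hb', Nat.lcm_mul_left]
      have hg'pos : 0 < Nat.gcd a' b' := Nat.gcd_pos_of_pos_left _ ha'pos
      have hl'pos : 0 < Nat.lcm a' b' := Nat.lcm_pos ha'pos hb'pos
      set k := Nat.gcd a' b' + Nat.lcm a' b' - 1 with hk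
      have hk1 : (k + 1) * p = Nat.gcd a b + Nat.lcm a b := by
        rw [hgcdeq, hlcmeq, show k + 1 = Nat.gcd a' b' + Nat.lcm a' b' from by omega]
        ring
      have hsucc : (k + 1) * p = k * p + p := Nat.succ_mul k p
      obtain ⟨L, hlen, hpw, hmem⟩ := extract_pieces hp f k s (by omega)
      set piece : Fin k → Finset ι := fun i => L.get (Fin.cast hlen.symm i) with hpiece
      have hpieceprop : ∀ i : Fin k, piece i ⊆ s ∧ (piece i).Nonempty ∧
          (p:ℤ) ∣ (∑ x ∈ piece i, f x).1 ∧ (p:ℤ) ∣ (∑ x ∈ piece i, f x).2 :=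
        fun i => hmem _ (List.get_mem L (Fin.cast hlen.symm i))
      set h : Fin k → ℤ × ℤ := fun i =>
        ((∑ x ∈ piece i, f x).1 / p, (∑ x ∈ piece i, f x).2 / p) with hh
      have hlt : Nat.gcd a' b' < g := by
        have h2 := Nat.mul_le_mul_right (Nat.gcd a' b') hp.two_le
        omega
      obtain ⟨S, hSsub, hSne, hSd1, hSd2⟩ := ih (Nat.gcd a' b') hlt a' b' ha'pos hb'pos rfl h
        Finset.univ (by rw [Finset.card_univ, Fintype.card_fin] <;> omega)
      have hkey : ∀ i j : Fin k, i.val < j.val → Disjoint (piece i) (piece j) := by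
        intro i j hij
        exact (List.pairwise_iff_get.mp hpw) (Fin.cast hlen.symm i) (Fin.cast hlen.symm j)
          (by simpa using hij)
      have hdisj : (↑S : Set (Fin k)).PairwiseDisjoint piece := by
        intro i _ j _ hij
        rcases Nat.lt_or_ge i.val j.val with hlt' | hge
        · exact hkey i j hlt'
        · have : j.val < i.val := lt_of_le_of_ne hge (fun e => hij (Fin.ext e.symm))
          exact (hkey j i this).symm
      have hsum : ∑ x ∈ S.biUnion piece, f x = ∑ i ∈ S, ∑ x ∈ piece i, f x :=
        Finset.sum_biUnion hdisj
      have hfst : (∑ x ∈ S.biUnion piece, f x).1 = (p:ℤ) * (∑ i ∈ S, h i).1 := by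
        rw [hsum, Prod.fst_sum, Prod.fst_sum, Finset.mul_sum]
        refine Finset.sum_congr rfl fun i hi => ?_
        exact (Int.mul_ediv_cancel' (hpieceprop i).2.2.1).symm
      have hsnd : (∑ x ∈ S.biUnion piece, f x).2 = (p:ℤ) * (∑ i ∈ S, h i).2 := by
        rw [hsum, Prod.snd_sum, Prod.snd_sum, Finset.mul_sum]
        refine Finset.sum_congr rfl fun i hi => ?_
        exact (Int.mul_ediv_cancel' (hpieceprop i).2.2.2).symm
      refine ⟨S.biUnion piece, ?_, ?_, ?_, ?_⟩
      · intro x hx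
        obtain ⟨i, hi, hxi⟩ := Finset.mem_biUnion.mp hx
        exact (hpieceprop i).1 hxi
      · obtain ⟨i, hi⟩ := hSne
        obtain ⟨x, hx⟩ := (hpieceprop i).2.1
        exact ⟨x, Finset.mem_biUnion.mpr ⟨i, hi, hx⟩⟩
      · rw [hfst, ha']
        push_cast
        exact mul_dvd_mul_left (p:ℤ) hSd1
      · rw [hsnd, hb']
        push_cast
        exact mul_dvd_mul_left (p:ℤ) hSd2

end MainPart
section Lower

lemma modeq_trick {q m u n : ℕ} (hdvd : q ∣ m * u + n) (hu : u ≡ 1 [MOD q]) :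
    q ∣ m + n := by
  have h1 : m * u + n ≡ m * 1 + n [MOD q] := Nat.ModEq.add_right n (Nat.ModEq.mul_left m hu)
  rw [mul_one] at h1
  exact (Nat.modEq_zero_iff_dvd).mp (h1.symm.trans ((Nat.modEq_zero_iff_dvd).mpr hdvd))

lemma modeq_trick0 {q m u n : ℕ} (hdvd : q ∣ m * u + n) (hu : u ≡ 0 [MOD q]) :
    q ∣ n := by
  have h1 : m * u + n ≡ m * 0 + n [MOD q] := Nat.ModEq.add_right n (Nat.ModEq.mul_left m hu)
  rw [mul_zero, zero_add] at h1
  exact (Nat.modEq_zero_iff_dvd).mp (h1.symm.trans ((Nat.modEq_zero_iff_dvd).mpr hdvd))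

lemma lower_bound (a b : ℕ) (ha : 2 ≤ a) (hb : 2 ≤ b) :
    ∃ f0 : Fin (Nat.gcd a b + Nat.lcm a b - 2) → ZMod a × ZMod b,
      ∀ T : Finset (Fin (Nat.gcd a b + Nat.lcm a b - 2)), T.Nonempty → ∑ i ∈ T, f0 i ≠ 0 := by
  have ha0 : 0 < a := by omega
  have hb0 : 0 < b := by omega
  haveI : NeZero a := ⟨by omega⟩
  haveI : NeZero b := ⟨by omega⟩
  obtain ⟨q, r, c, d, hqa, hqb, hqr, hqc, hrd, hcd⟩ := split_aux (a*b) a b rfl ha0 hb0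
  have hq0 : 0 < q := by
    rcases Nat.eq_zero_or_pos q with h|h
    · subst h; simp at hqa; omega
    · exact h
  have hr0 : 0 < r := by
    rcases Nat.eq_zero_or_pos r with h|h
    · subst h; simp at hqa; omega
    · exact h
  have hc0 : 0 < c := by
    rcases Nat.eq_zero_or_pos c with h|h
    · subst h; simp at hqa; omega
    · exact h
  have hd0 : 0 < d := by
    rcases Nat.eq_zero_or_pos d with h|h
    · subst h; simp at hqb; omega
    · exact h
  have hgcd : Nat.gcd a b = q * r := by
    rw [hqa, hqb, show q * r * c = (q * r) * c from rfl, show q * r * d = (q * r) * d from rfl,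
      Nat.gcd_mul_left, hcd, mul_one]
  have hlcm : Nat.lcm a b = q * r * c * d := by
    have h1 : Nat.gcd a b * Nat.lcm a b = a * b := Nat.gcd_mul_lcm a b
    have h2 : a * b = (q * r) * (q * r * c * d) := by rw [hqa, hqb]; ring
    rw [hgcd, h2] at h1
    have hqr0 : 0 < q * r := Nat.mul_pos hq0 hr0
    exact Nat.eq_of_mul_eq_mul_left hqr0 h1
  have hcop_u : Nat.Coprime (r * c) q := Nat.Coprime.mul hqr.symm hqc.symm
  have hcop_w : Nat.Coprime r (q * d) := Nat.Coprime.mul_right hqr.symm hrd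
  obtain ⟨u, hu1, hu2⟩ := Nat.chineseRemainder hcop_u 0 1
  obtain ⟨w, hw1, hw2⟩ := Nat.chineseRemainder hcop_w 1 0
  set x : ZMod a × ZMod b := (((u:ℕ) : ZMod a), ((w:ℕ) : ZMod b)) with hx
  set y : ZMod a × ZMod b := ((1 : ZMod a), (1 : ZMod b)) with hy
  have hg1 : 1 ≤ Nat.gcd a b := Nat.gcd_pos_of_pos_left _ ha0
  have hl2 : 2 ≤ Nat.lcm a b :=
    le_trans hb (Nat.le_of_dvd (Nat.lcm_pos ha0 hb0) (Nat.dvd_lcm_right a b))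
  refine ⟨fun i => if i.val < Nat.gcd a b - 1 then x else y, fun T hTne hsum => ?_⟩
  set T1 := T.filter (fun i => i.val < Nat.gcd a b - 1) with hT1
  set T2 := T.filter (fun i => ¬ i.val < Nat.gcd a b - 1) with hT2
  set m := T1.card with hm
  set n := T2.card with hn
  have hsplit := Finset.sum_filter_add_sum_filter_not T (fun i => i.val < Nat.gcd a b - 1)
    (fun i => if i.val < Nat.gcd a b - 1 then x else y)
  have he1 : ∑ i ∈ T1, (if i.val < Nat.gcd a b - 1 then x else y) = ∑ _i ∈ T1, x :=
    Finset.sum_congr rfl (fun i hi => if_pos (Finset.mem_filter.mp hi).2)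
  have he2 : ∑ i ∈ T2, (if i.val < Nat.gcd a b - 1 then x else y) = ∑ _i ∈ T2, y :=
    Finset.sum_congr rfl (fun i hi => if_neg (Finset.mem_filter.mp hi).2)
  rw [he1, he2] at hsplit
  have hsum' : (∑ _i ∈ T1, x) + (∑ _i ∈ T2, y) = 0 := hsplit.trans hsum
  have hfa : ((m * u + n : ℕ) : ZMod a) = 0 := by
    have h1 := congrArg Prod.fst hsum'
    rw [Prod.fst_add, Prod.fst_sum, Prod.fst_sum, Prod.fst_zero] at h1
    simp only [hx, hy] at h1
    rw [Finset.sum_const, Finset.sum_const, nsmul_eq_mul, nsmul_eq_mul, mul_one] at h1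
    push_cast
    rw [← hm, ← hn] at h1
    linear_combination h1
  have hfb : ((m * w + n : ℕ) : ZMod b) = 0 := by
    have h1 := congrArg Prod.snd hsum'
    rw [Prod.snd_add, Prod.snd_sum, Prod.snd_sum, Prod.snd_zero] at h1
    simp only [hx, hy] at h1
    rw [Finset.sum_const, Finset.sum_const, nsmul_eq_mul, nsmul_eq_mul, mul_one] at h1
    push_cast
    rw [← hm, ← hn] at h1
    linear_combination h1
  have hdvda : a ∣ m * u + n := (ZMod.natCast_eq_zero_iff _ _).mp hfa
  have hdvdb : b ∣ m * w + n := (ZMod.natCast_eq_zero_iff _ _).mp hfb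
  have hrc_n : r * c ∣ n :=
    modeq_trick0 (dvd_trans ⟨q, by rw [hqa]; ring⟩ hdvda) hu1
  have hq_mn : q ∣ m + n :=
    modeq_trick (dvd_trans ⟨r * c, by rw [hqa]; ring⟩ hdvda) hu2
  have hr_mn : r ∣ m + n :=
    modeq_trick (dvd_trans ⟨q * d, by rw [hqb]; ring⟩ hdvdb) hw1
  have hqd_n : q * d ∣ n :=
    modeq_trick0 (dvd_trans ⟨r, by rw [hqb]; ring⟩ hdvdb) hw2
  have hcop2 : Nat.Coprime (r * c) (q * d) :=
    Nat.Coprime.mul (Nat.Coprime.mul_right hqr.symm hrd) (Nat.Coprime.mul_right hqc.symm hcd)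
  have hlcm_n : (r * c) * (q * d) ∣ n := Nat.Coprime.mul_dvd_of_dvd_of_dvd hcop2 hrc_n hqd_n
  have hmbound : m ≤ Nat.gcd a b - 1 := by
    have hsub : T1.image Fin.val ⊆ Finset.range (Nat.gcd a b - 1) := by
      intro v hv
      obtain ⟨i, hi, rfl⟩ := Finset.mem_image.mp hv
      exact Finset.mem_range.mpr (Finset.mem_filter.mp hi).2
    have hcard := Finset.card_le_card hsub
    rwa [Finset.card_image_of_injective _ Fin.val_injective, Finset.card_range] at hcard
  have hnbound : n ≤ Nat.lcm a b - 1 := by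
    have hsub : T2.image Fin.val ⊆
        Finset.range (Nat.gcd a b + Nat.lcm a b - 2) \ Finset.range (Nat.gcd a b - 1) := by
      intro v hv
      obtain ⟨i, hi, rfl⟩ := Finset.mem_image.mp hv
      refine Finset.mem_sdiff.mpr ⟨Finset.mem_range.mpr i.isLt, fun hmem => ?_⟩
      exact (Finset.mem_filter.mp hi).2 (Finset.mem_range.mp hmem)
    have hcard := Finset.card_le_card hsub
    rw [Finset.card_image_of_injective _ Fin.val_injective,
      Finset.card_sdiff_of_subset (Finset.range_subset_range.mpr (by omega)),
      Finset.card_range, Finset.card_range] at hcard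
    omega
  have hlcmeq : Nat.lcm a b = (r * c) * (q * d) := by rw [hlcm]; ring
  have hn0 : n = 0 := by
    rcases Nat.eq_zero_or_pos n with h | h
    · exact h
    · exfalso
      have := Nat.le_of_dvd h (hlcmeq ▸ hlcm_n)
      omega
  have hg_m : q * r ∣ m := by
    rw [hn0, Nat.add_zero] at hq_mn hr_mn
    exact Nat.Coprime.mul_dvd_of_dvd_of_dvd hqr hq_mn hr_mn
  have hm0 : m = 0 := by
    rcases Nat.eq_zero_or_pos m with h | h
    · exact h
    · exfalso
      have := Nat.le_of_dvd h (hgcd ▸ hg_m)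
      omega
  have hcards := Finset.card_filter_add_card_filter_not
    (s := T) (p := fun i => i.val < Nat.gcd a b - 1)
  have hTpos : 0 < T.card := Finset.card_pos.mpr hTne
  rw [← hT1, ← hT2, ← hm, ← hn] at hcards
  omega

end Lower

/-- The Davenport constant of an additive commutative group: the least `k > 0` such that
every sequence of `k` elements has a nonempty subsequence summing to `0`. -/
noncomputable def DavenportAdd (G : Type*) [AddCommGroup G] : ℕ :=
  sInf {k : ℕ | 0 < k ∧ ∀ f : Fin k → G,
    ∃ T : Finset (Fin k), T.Nonempty ∧ ∑ i ∈ T, f i = 0}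

theorem stmt2 (a b : ℕ) (ha : 2 ≤ a) (hb : 2 ≤ b) :
    DavenportAdd (ZMod a × ZMod b) = (Nat.gcd a b - 1) + (Nat.lcm a b - 1) + 1 := by
  have ha0 : 0 < a := by omega
  have hb0 : 0 < b := by omega
  haveI : NeZero a := ⟨by omega⟩
  haveI : NeZero b := ⟨by omega⟩
  have hg1 : 1 ≤ Nat.gcd a b := Nat.gcd_pos_of_pos_left _ ha0
  have hl2 : 2 ≤ Nat.lcm a b :=
    le_trans hb (Nat.le_of_dvd (Nat.lcm_pos ha0 hb0) (Nat.dvd_lcm_right a b))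
  set N := Nat.gcd a b + Nat.lcm a b - 1 with hN
  have hNpos : 0 < N := by omega
  have hmem : N ∈ {k : ℕ | 0 < k ∧ ∀ f : Fin k → ZMod a × ZMod b,
      ∃ T : Finset (Fin k), T.Nonempty ∧ ∑ i ∈ T, f i = 0} := by
    refine ⟨hNpos, fun f => ?_⟩
    set F : Fin N → ℤ × ℤ := fun i => (((f i).1.val : ℤ), ((f i).2.val : ℤ)) with hF
    obtain ⟨T, hTsub, hTne, hd1, hd2⟩ := main_int (Nat.gcd a b) a b ha0 hb0 rfl F Finset.univ
      (by rw [Finset.card_univ, Fintype.card_fin] <;> omega)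
    refine ⟨T, hTne, ?_⟩
    have h1 : ((∑ i ∈ T, F i).1 : ZMod a) = 0 := by
      rw [ZMod.intCast_zmod_eq_zero_iff_dvd]; exact hd1
    have h2 : ((∑ i ∈ T, F i).2 : ZMod b) = 0 := by
      rw [ZMod.intCast_zmod_eq_zero_iff_dvd]; exact hd2
    rw [Prod.fst_sum, Int.cast_sum] at h1
    rw [Prod.snd_sum, Int.cast_sum] at h2
    have hfix1 : ∀ i : Fin N, (((F i).1 : ℤ) : ZMod a) = (f i).1 := fun i => by
      simp [hF, ZMod.natCast_val, ZMod.cast_id]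
    have hfix2 : ∀ i : Fin N, (((F i).2 : ℤ) : ZMod b) = (f i).2 := fun i => by
      simp [hF, ZMod.natCast_val, ZMod.cast_id]
    refine Prod.ext ?_ ?_
    · rw [Prod.fst_sum, Prod.fst_zero]
      exact (Finset.sum_congr rfl (fun i _ => (hfix1 i).symm)).trans h1
    · rw [Prod.snd_sum, Prod.snd_zero]
      exact (Finset.sum_congr rfl (fun i _ => (hfix2 i).symm)).trans h2
  have hub : DavenportAdd (ZMod a × ZMod b) ≤ N := Nat.sInf_le hmem
  have hlb : ∀ k ∈ {k : ℕ | 0 < k ∧ ∀ f : Fin k → ZMod a × ZMod b,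
      ∃ T : Finset (Fin k), T.Nonempty ∧ ∑ i ∈ T, f i = 0}, N ≤ k := by
    intro k hk
    by_contra hlt
    push_neg at hlt
    have hle : k ≤ Nat.gcd a b + Nat.lcm a b - 2 := by omega
    obtain ⟨f0, hf0⟩ := lower_bound a b ha hb
    obtain ⟨hkpos, huniv⟩ := hk
    obtain ⟨T, hTne, hTsum⟩ := huniv (fun i => f0 (Fin.castLE hle i))
    refine hf0 (T.image (Fin.castLE hle)) (hTne.image _) ?_
    rw [Finset.sum_image (fun x _ y _ h => Fin.castLE_injective hle h)]
    exact hTsum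
  have heq : (Nat.gcd a b - 1) + (Nat.lcm a b - 1) + 1 = N := by omega
  rw [heq]
  exact le_antisymm hub (le_csInf ⟨N, hmem⟩ hlb)
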